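/- For every real number q with q > 0 and q ≠ 1, every natural number N, and every integer n with 0 ≤ n ≤ N, the following identity holds: (−1)^n q^{2Nn − n(n−1)} · ((q^{−2N};q^2)_n / (q^2;q^2)_n) · Σ_{k=0}^{N−n} q^{2(N−n+1)k} (q^{−2(N−n)};q^2)_k / ((q^2;q^2)_k · (n+k+1)_{q^2}) = 1/(N+1)_{q^2}. (With N = 2j, this is the scalar content of the resolution of unity (2j+1)_{q^2} H[|x,z⟩⟨x,z|] = 1 for the SU_q(2) coherent states of spin j, after the Haar functional values H[ζ^m] = q^{2m}/(m+1)_{q^2} have been inserted.) -/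

import Mathlib

/-- The q-shifted factorial `(a;q)_n = ∏_{i=0}^{n-1} (1 - a q^i)`. -/
def qPoch (a q : ℝ) (n : ℕ) : ℝ := ∏ i ∈ Finset.range n, (1 - a * q ^ i)

/-- The q-number `(n)_q = (1 - q^n)/(1 - q)`. -/
noncomputable def qNum (q : ℝ) (n : ℕ) : ℝ := (1 - q ^ n) / (1 - q)

namespace RUaux

/-- `c Q k = (-1)^k Q^{k(k+1)/2}`, as a product. -/
noncomputable def c (Q : ℝ) (k : ℕ) : ℝ := ∏ i ∈ Finset.range k, (-(Q ^ (i + 1)))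

lemma c_succ (Q : ℝ) (k : ℕ) : c Q (k + 1) = c Q k * (-(Q ^ (k + 1))) :=
  Finset.prod_range_succ _ _

lemma c_zero (Q : ℝ) : c Q 0 = 1 := rfl

lemma qPoch_succ (a Q : ℝ) (m : ℕ) :
    qPoch a Q (m + 1) = qPoch a Q m * (1 - a * Q ^ m) :=
  Finset.prod_range_succ _ _

lemma P_succ (Q : ℝ) (m : ℕ) :
    qPoch Q Q (m + 1) = qPoch Q Q m * (1 - Q ^ (m + 1)) := by
  rw [qPoch_succ]; ring_nf

lemma pow_ne_one (Q : ℝ) (hQ : 0 < Q) (hQ1 : Q ≠ 1) (m : ℕ) (hm : m ≠ 0) :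
    Q ^ m ≠ 1 := by
  rcases lt_or_gt_of_ne hQ1 with h | h
  · exact ne_of_lt (pow_lt_one₀ hQ.le h hm)
  · exact ne_of_gt (one_lt_pow₀ h hm)

lemma P_ne (Q : ℝ) (hQ : 0 < Q) (hQ1 : Q ≠ 1) (m : ℕ) : qPoch Q Q m ≠ 0 := by
  unfold qPoch
  refine Finset.prod_ne_zero_iff.2 fun i _ => ?_
  have : Q * Q ^ i = Q ^ (i + 1) := by ring
  rw [this]
  intro h
  exact pow_ne_one Q hQ hQ1 (i + 1) (Nat.succ_ne_zero i) (by linarith)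

lemma D_ne (Q : ℝ) (hQ : 0 < Q) (hQ1 : Q ≠ 1) (m : ℕ) (hm : m ≠ 0) :
    (1 : ℝ) - Q ^ m ≠ 0 := by
  intro h
  exact pow_ne_one Q hQ hQ1 m hm (by linarith)

/-- The key sum. -/
noncomputable def S (Q : ℝ) (n M : ℕ) : ℝ :=
  ∑ k ∈ Finset.range (M + 1),
    c Q k * qPoch Q Q M / (qPoch Q Q k * qPoch Q Q (M - k) * (1 - Q ^ (n + k + 1)))

lemma S_rec (Q : ℝ) (hQ : 0 < Q) (hQ1 : Q ≠ 1) (n M : ℕ) :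
    S Q n (M + 1) = S Q n M - Q ^ (M + 1) * S Q (n + 1) M := by
  unfold S
  rw [Finset.mul_sum]
  set F : ℕ → ℝ := fun k =>
    c Q k * qPoch Q Q (M + 1) / (qPoch Q Q k * qPoch Q Q (M + 1 - k) * (1 - Q ^ (n + k + 1)))
    with hF
  set f : ℕ → ℝ := fun k =>
    c Q k * qPoch Q Q M / (qPoch Q Q k * qPoch Q Q (M - k) * (1 - Q ^ (n + k + 1)))
    with hf
  set g : ℕ → ℝ := fun k =>
    Q ^ (M + 1) *
      (c Q k * qPoch Q Q M / (qPoch Q Q k * qPoch Q Q (M - k) * (1 - Q ^ (n + 1 + k + 1))))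
    with hg
  have h0 : F 0 = f 0 := by
    simp only [hF, hf, c_zero, Nat.sub_zero]
    rw [P_succ]
    have h1 : qPoch Q Q M ≠ 0 := P_ne Q hQ hQ1 M
    have h2 : (1 : ℝ) - Q ^ (M + 1) ≠ 0 := D_ne Q hQ hQ1 (M + 1) (by omega)
    have h3 : (1 : ℝ) - Q ^ (n + 0 + 1) ≠ 0 := D_ne Q hQ hQ1 (n + 0 + 1) (by omega)
    have h00 : qPoch Q Q 0 = 1 := rfl
    rw [h00]
    field_simp
  have hlast : F (M + 1) = -(g M) := by
    simp only [hF, hg, Nat.sub_self]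
    rw [c_succ, P_succ]
    have h1 : qPoch Q Q M ≠ 0 := P_ne Q hQ hQ1 M
    have h2 : (1 : ℝ) - Q ^ (M + 1) ≠ 0 := D_ne Q hQ hQ1 (M + 1) (by omega)
    have h3 : (1 : ℝ) - Q ^ (n + (M + 1) + 1) ≠ 0 := D_ne Q hQ hQ1 _ (by omega)
    have h4 : (1 : ℝ) - Q ^ (n + 1 + M + 1) ≠ 0 := D_ne Q hQ hQ1 _ (by omega)
    have e2 : n + 1 + M + 1 = n + (M + 1) + 1 := by omega
    rw [e2] at h4 ⊢
    have h00 : qPoch Q Q 0 = 1 := rfl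
    rw [h00]
    field_simp
  have hmid : ∀ k, k < M → F (k + 1) = f (k + 1) - g k := by
    intro k hk
    obtain ⟨d, hd⟩ : ∃ d, M = k + 1 + d := ⟨M - (k + 1), by omega⟩
    subst hd
    simp only [hF, hf, hg]
    have e1 : k + 1 + d + 1 - (k + 1) = d + 1 := by omega
    have e2 : k + 1 + d - (k + 1) = d := by omega
    have e3 : k + 1 + d - k = d + 1 := by omega
    rw [e1, e2, e3, c_succ]
    have hPk : qPoch Q Q k ≠ 0 := P_ne Q hQ hQ1 k
    have hPd : qPoch Q Q d ≠ 0 := P_ne Q hQ hQ1 d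
    have hPM : qPoch Q Q (k + 1 + d) ≠ 0 := P_ne Q hQ hQ1 _
    have hDk : (1 : ℝ) - Q ^ (k + 1) ≠ 0 := D_ne Q hQ hQ1 _ (by omega)
    have hDd : (1 : ℝ) - Q ^ (d + 1) ≠ 0 := D_ne Q hQ hQ1 _ (by omega)
    have hD1 : (1 : ℝ) - Q ^ (n + (k + 1) + 1) ≠ 0 := D_ne Q hQ hQ1 _ (by omega)
    have hD2 : (1 : ℝ) - Q ^ (n + 1 + k + 1) ≠ 0 := D_ne Q hQ hQ1 _ (by omega)
    have e4 : n + 1 + k + 1 = n + (k + 1) + 1 := by omega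
    rw [e4] at hD2 ⊢
    have hP1 : qPoch Q Q (k + 1) = qPoch Q Q k * (1 - Q ^ (k + 1)) := P_succ Q k
    have hP2 : qPoch Q Q (d + 1) = qPoch Q Q d * (1 - Q ^ (d + 1)) := P_succ Q d
    have hP3 : qPoch Q Q (k + 1 + d + 1) = qPoch Q Q (k + 1 + d) * (1 - Q ^ (k + 1 + d + 1)) :=
      P_succ Q _
    rw [hP1, hP2, hP3]
    field_simp
    ring
  rw [Finset.sum_range_succ' F, Finset.sum_range_succ (fun k => F (k + 1)),
    Finset.sum_range_succ' f, Finset.sum_range_succ g]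
  have : ∑ k ∈ Finset.range M, F (k + 1) = ∑ k ∈ Finset.range M, (f (k + 1) - g k) :=
    Finset.sum_congr rfl fun k hk => hmid k (Finset.mem_range.1 hk)
  rw [this, Finset.sum_sub_distrib, h0, hlast]
  ring

lemma S_eq (Q : ℝ) (hQ : 0 < Q) (hQ1 : Q ≠ 1) (M : ℕ) : ∀ n,
    S Q n M = qPoch Q Q n * qPoch Q Q M / qPoch Q Q (n + M + 1) := by
  induction M with
  | zero =>
      intro n
      unfold S
      rw [Finset.sum_range_one]
      have h1 : qPoch Q Q n ≠ 0 := P_ne Q hQ hQ1 n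
      have h2 : (1 : ℝ) - Q ^ (n + 0 + 1) ≠ 0 := D_ne Q hQ hQ1 _ (by omega)
      have h3 : qPoch Q Q (n + 0 + 1) = qPoch Q Q n * (1 - Q ^ (n + 0 + 1)) := P_succ Q _
      rw [h3, c_zero]
      have h00 : qPoch Q Q 0 = 1 := rfl
      rw [show (0 : ℕ) - 0 = 0 from rfl, h00]
      field_simp
  | succ M ih =>
      intro n
      rw [S_rec Q hQ hQ1 n M, ih n, ih (n + 1)]
      have hPn : qPoch Q Q n ≠ 0 := P_ne Q hQ hQ1 n
      have hPM : qPoch Q Q M ≠ 0 := P_ne Q hQ hQ1 M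
      have hPS : qPoch Q Q (n + M + 1) ≠ 0 := P_ne Q hQ hQ1 _
      have e1 : qPoch Q Q (n + 1) = qPoch Q Q n * (1 - Q ^ (n + 1)) := P_succ Q n
      have e2 : qPoch Q Q (M + 1) = qPoch Q Q M * (1 - Q ^ (M + 1)) := P_succ Q M
      have epow : Q ^ (n + M + 2) = Q ^ (n + 1) * Q ^ (M + 1) := by
        rw [← pow_add]; congr 1; omega
      have e3 : qPoch Q Q (n + (M + 1) + 1)
          = qPoch Q Q (n + M + 1) * (1 - Q ^ (n + 1) * Q ^ (M + 1)) := by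
        have h : n + (M + 1) + 1 = (n + M + 1) + 1 := by omega
        rw [h, P_succ, show n + M + 1 + 1 = n + M + 2 from by omega, epow]
      have e4 : qPoch Q Q (n + 1 + M + 1)
          = qPoch Q Q (n + M + 1) * (1 - Q ^ (n + 1) * Q ^ (M + 1)) := by
        rw [show n + 1 + M + 1 = n + (M + 1) + 1 from by omega, e3]
      rw [e1, e2, e3, e4]
      have hu : (1 : ℝ) - Q ^ (n + 1) * Q ^ (M + 1) ≠ 0 := by
        rw [← epow]; exact D_ne Q hQ hQ1 _ (by omega)
      set u := Q ^ (n + 1) with hu'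
      set v := Q ^ (M + 1) with hv'
      field_simp
      rw [mul_comm v u, eq_div_iff hu, sub_mul, div_mul_cancel₀ _ hu]; ring



lemma claimA (q : ℝ) (hq0 : q ≠ 0) (N : ℕ) :
    ∀ n, n ≤ N →
      (-1 : ℝ) ^ n * q ^ (2 * (N : ℤ) * (n : ℤ) - (n : ℤ) * ((n : ℤ) - 1)) *
          qPoch (q ^ (-2 * (N : ℤ))) (q ^ 2) n * qPoch (q ^ 2) (q ^ 2) (N - n)
        = qPoch (q ^ 2) (q ^ 2) N := by
  intro n
  induction n with
  | zero =>
      intro _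
      have h0 : qPoch (q ^ (-2 * (N : ℤ))) (q ^ 2) 0 = 1 := rfl
      rw [h0]; norm_num
  | succ n ih =>
      intro h
      have hn : n ≤ N := by omega
      obtain ⟨d, hd⟩ : ∃ d, N = n + 1 + d := ⟨N - (n + 1), by omega⟩
      have hE : 2 * (N : ℤ) * ((n + 1 : ℕ) : ℤ) - ((n + 1 : ℕ) : ℤ) * (((n + 1 : ℕ) : ℤ) - 1)
          = (2 * (N : ℤ) * (n : ℤ) - (n : ℤ) * ((n : ℤ) - 1)) + (2 * (N : ℤ) - 2 * (n : ℤ)) := by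
        push_cast; ring
      rw [hE, zpow_add₀ hq0, qPoch_succ]
      have hNn1 : N - (n + 1) = d := by omega
      rw [hNn1]
      have hq2 : ((q : ℝ) ^ 2) ≠ 0 := pow_ne_zero 2 hq0
      have h1 : q ^ (2 * (N : ℤ) - 2 * (n : ℤ)) = ((q : ℝ) ^ 2) ^ (d + 1) := by
        rw [← pow_mul, ← zpow_natCast q (2 * (d + 1))]
        congr 1
        subst hd; push_cast; ring
      have h2 : q ^ (-2 * (N : ℤ)) * ((q : ℝ) ^ 2) ^ n = (((q : ℝ) ^ 2) ^ (d + 1))⁻¹ := by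
        rw [← pow_mul, ← zpow_natCast q (2 * n), ← zpow_add₀ hq0,
          ← pow_mul, ← zpow_natCast q (2 * (d + 1)), ← zpow_neg]
        congr 1
        subst hd; push_cast; ring
      have hfac : (-1 : ℝ) * q ^ (2 * (N : ℤ) - 2 * (n : ℤ)) *
          (1 - q ^ (-2 * (N : ℤ)) * ((q : ℝ) ^ 2) ^ n) = 1 - ((q : ℝ) ^ 2) ^ (d + 1) := by
        rw [h1, h2]
        have hne : (((q : ℝ) ^ 2) ^ (d + 1)) ≠ 0 := pow_ne_zero _ hq2
        field_simp
        ring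
      have ihn := ih hn
      have hNn : N - n = d + 1 := by omega
      rw [hNn, P_succ] at ihn
      rw [pow_succ]
      linear_combination ((-1 : ℝ) ^ n * q ^ (2 * (N : ℤ) * (n : ℤ) - (n : ℤ) * ((n : ℤ) - 1)) *
        qPoch (q ^ (-2 * (N : ℤ))) (q ^ 2) n * qPoch (q ^ 2) (q ^ 2) d) * hfac + ihn

lemma claimB (q : ℝ) (hq0 : q ≠ 0) (M : ℕ) :
    ∀ k, k ≤ M →
      (q : ℝ) ^ (2 * (M + 1) * k) * qPoch (q ^ (-2 * (M : ℤ))) (q ^ 2) k *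
          qPoch (q ^ 2) (q ^ 2) (M - k)
        = c (q ^ 2) k * qPoch (q ^ 2) (q ^ 2) M := by
  intro k
  induction k with
  | zero =>
      intro _
      have h0 : qPoch (q ^ (-2 * (M : ℤ))) (q ^ 2) 0 = 1 := rfl
      rw [h0, c_zero]; norm_num
  | succ k ih =>
      intro h
      have hk : k ≤ M := by omega
      obtain ⟨d, hd⟩ : ∃ d, M = k + 1 + d := ⟨M - (k + 1), by omega⟩
      have hE : 2 * (M + 1) * (k + 1) = 2 * (M + 1) * k + 2 * (M + 1) := by ring
      rw [hE, pow_add, qPoch_succ, c_succ]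
      have hMk1 : M - (k + 1) = d := by omega
      rw [hMk1]
      have hq2 : ((q : ℝ) ^ 2) ≠ 0 := pow_ne_zero 2 hq0
      have h1 : (q : ℝ) ^ (2 * (M + 1)) = ((q : ℝ) ^ 2) ^ (k + 1) * ((q : ℝ) ^ 2) ^ (d + 1) := by
        rw [← pow_mul, ← pow_mul, ← pow_add]
        congr 1
        omega
      have h2 : q ^ (-2 * (M : ℤ)) * ((q : ℝ) ^ 2) ^ k = (((q : ℝ) ^ 2) ^ (d + 1))⁻¹ := by
        rw [← pow_mul, ← zpow_natCast q (2 * k), ← zpow_add₀ hq0,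
          ← pow_mul, ← zpow_natCast q (2 * (d + 1)), ← zpow_neg]
        congr 1
        subst hd; push_cast; ring
      have hfac : (q : ℝ) ^ (2 * (M + 1)) * (1 - q ^ (-2 * (M : ℤ)) * ((q : ℝ) ^ 2) ^ k)
          = -(((q : ℝ) ^ 2) ^ (k + 1)) * (1 - ((q : ℝ) ^ 2) ^ (d + 1)) := by
        rw [h1, h2]
        have hne : (((q : ℝ) ^ 2) ^ (d + 1)) ≠ 0 := pow_ne_zero _ hq2
        field_simp
        ring
      have ihn := ih hk
      have hMk : M - k = d + 1 := by omega
      rw [hMk, P_succ] at ihn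
      linear_combination (-(((q : ℝ) ^ 2) ^ (k + 1))) * ihn +
        ((q : ℝ) ^ (2 * (M + 1) * k) * qPoch (q ^ (-2 * (M : ℤ))) (q ^ 2) k *
          qPoch (q ^ 2) (q ^ 2) d) * hfac

end RUaux

open RUaux in
/-- with `N = 2j`, the scalar content of the resolution of unity
`(2j+1)_{q²} H[|x,z⟩⟨x,z|] = 1` for the `SU_q(2)` coherent states:
`(−1)^n q^{2Nn−n(n−1)} ((q^{−2N};q²)_n/(q²;q²)_n) ·
 Σ_{k=0}^{N−n} q^{2(N−n+1)k} (q^{−2(N−n)};q²)_k/((q²;q²)_k (n+k+1)_{q²}) = 1/(N+1)_{q²}`. -/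
theorem resolution_of_unity_scalar (q : ℝ) (hq : 0 < q) (hq1 : q ≠ 1) (N n : ℕ)
    (hn : n ≤ N) :
    (-1) ^ n * q ^ (2 * (N : ℤ) * (n : ℤ) - (n : ℤ) * ((n : ℤ) - 1)) *
        (qPoch (q ^ (-2 * (N : ℤ))) (q ^ 2) n / qPoch (q ^ 2) (q ^ 2) n) *
        ∑ k ∈ Finset.range (N - n + 1),
          q ^ (2 * (N - n + 1) * k) * qPoch (q ^ (-2 * ((N : ℤ) - (n : ℤ)))) (q ^ 2) k /
            (qPoch (q ^ 2) (q ^ 2) k * qNum (q ^ 2) (n + k + 1))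
      = 1 / qNum (q ^ 2) (N + 1) := by
  have hq0 : q ≠ 0 := ne_of_gt hq
  have hQ : (0 : ℝ) < q ^ 2 := by positivity
  have hQ1 : (q : ℝ) ^ 2 ≠ 1 := by
    intro h
    have h2 : (q - 1) * (q + 1) = 0 := by nlinarith
    rcases mul_eq_zero.1 h2 with h3 | h3
    · exact hq1 (by linarith)
    · linarith
  set M := N - n with hM'
  have hM : N = n + M := by omega
  have hzc : (-2 : ℤ) * ((N : ℤ) - (n : ℤ)) = -2 * (M : ℤ) := by
    rw [hM]; push_cast; ring
  rw [hzc]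
  have hsum : ∀ k ∈ Finset.range (M + 1),
      q ^ (2 * (M + 1) * k) * qPoch (q ^ (-2 * (M : ℤ))) (q ^ 2) k /
          (qPoch (q ^ 2) (q ^ 2) k * qNum (q ^ 2) (n + k + 1))
        = (1 - q ^ 2) *
          (c (q ^ 2) k * qPoch (q ^ 2) (q ^ 2) M /
            (qPoch (q ^ 2) (q ^ 2) k * qPoch (q ^ 2) (q ^ 2) (M - k) *
              (1 - (q ^ 2) ^ (n + k + 1)))) := by
    intro k hk
    have hkM : k ≤ M := by
      have := Finset.mem_range.1 hk; omega
    have hB := claimB q hq0 M k hkM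
    have hPk : qPoch (q ^ 2) (q ^ 2) k ≠ 0 := P_ne _ hQ hQ1 k
    have hPMk : qPoch (q ^ 2) (q ^ 2) (M - k) ≠ 0 := P_ne _ hQ hQ1 _
    have hD : (1 : ℝ) - (q ^ 2) ^ (n + k + 1) ≠ 0 := D_ne _ hQ hQ1 _ (by omega)
    have h1Q : (1 : ℝ) - q ^ 2 ≠ 0 := fun h => hQ1 (by linarith)
    rw [qNum]
    set Y : ℝ := q ^ (2 * (M + 1) * k) with hY
    set B2 : ℝ := qPoch (q ^ (-2 * (M : ℤ))) (q ^ 2) k with hB2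
    set DK : ℝ := ((q : ℝ) ^ 2) ^ (n + k + 1) with hDK
    clear_value Y B2 DK
    field_simp
    linear_combination hB
  rw [Finset.sum_congr rfl hsum, ← Finset.mul_sum]
  have hS : (∑ k ∈ Finset.range (M + 1),
      c (q ^ 2) k * qPoch (q ^ 2) (q ^ 2) M /
        (qPoch (q ^ 2) (q ^ 2) k * qPoch (q ^ 2) (q ^ 2) (M - k) *
          (1 - (q ^ 2) ^ (n + k + 1)))) = S (q ^ 2) n M := rfl
  rw [hS, S_eq _ hQ hQ1 M n]
  have hA := claimA q hq0 N n hn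
  rw [show N - n = M from rfl] at hA
  set s1 : ℝ := (-1 : ℝ) ^ n with hs1
  set X : ℝ := q ^ (2 * (N : ℤ) * (n : ℤ) - (n : ℤ) * ((n : ℤ) - 1)) with hX
  set P1 : ℝ := qPoch (q ^ (-2 * (N : ℤ))) (q ^ 2) n with hP1
  have hPn : qPoch (q ^ 2) (q ^ 2) n ≠ 0 := P_ne _ hQ hQ1 n
  have hPM : qPoch (q ^ 2) (q ^ 2) M ≠ 0 := P_ne _ hQ hQ1 M
  have hPN1 : qPoch (q ^ 2) (q ^ 2) (N + 1) ≠ 0 := P_ne _ hQ hQ1 _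
  have hDN : (1 : ℝ) - (q ^ 2) ^ (N + 1) ≠ 0 := D_ne _ hQ hQ1 _ (by omega)
  have h1Q : (1 : ℝ) - q ^ 2 ≠ 0 := fun h => hQ1 (by linarith)
  have hnM1 : n + M + 1 = N + 1 := by omega
  rw [hnM1, qNum]
  have hPsucc : qPoch (q ^ 2) (q ^ 2) (N + 1)
      = qPoch (q ^ 2) (q ^ 2) N * (1 - (q ^ 2) ^ (N + 1)) := P_succ _ N
  rw [hPsucc]
  set DN : ℝ := ((q : ℝ) ^ 2) ^ (N + 1) with hDNdef
  have hPN : qPoch (q ^ 2) (q ^ 2) N ≠ 0 := P_ne _ hQ hQ1 N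
  clear_value s1 X P1 DN
  field_simp
  linear_combination hA
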